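/- Let T > 0 and H be a real Hilbert space. If u : [0,T] → H is absolutely continuous with derivative u̇ ∈ L²(0,T;H) and satisfies the anti-periodicity condition u(0) = −u(T), then ‖u‖²_∞ ≤ (T/4) ∫₀ᵀ ‖u̇(t)‖² dt, where ‖u‖_∞ = sup_{t ∈ [0,T]} ‖u(t)‖. -/

import Mathlib

open MeasureTheory Set Filter Topology RealInnerProductSpace

noncomputable section

/-- `u` is an absolutely continuous path on `[0,T]` with derivative `u'` in `L²(0,T;F)`,
i.e. `u` belongs to the space `A²` with derivative `u'`. -/
def InA2 {F : Type*} [NormedAddCommGroup F] [NormedSpace ℝ F]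
    (T : ℝ) (u u' : ℝ → F) : Prop :=
  MemLp u' 2 (volume.restrict (Set.Ioc (0:ℝ) T)) ∧
  ∀ t ∈ Set.Icc (0:ℝ) T, u t = u 0 + ∫ s in (0:ℝ)..t, u' s

/-- Sobolev-type inequality for anti-periodic paths:
if `u ∈ A²_H` satisfies `u(0) = -u(T)` then `‖u‖²_∞ ≤ (T/4) ∫₀ᵀ ‖u̇‖²`. -/
theorem antiperiodic_sup_bound
    {H : Type*} [NormedAddCommGroup H] [InnerProductSpace ℝ H] [CompleteSpace H]
    (T : ℝ) (hT : 0 < T) (u u' : ℝ → H)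
    (hu : InA2 T u u') (hap : u 0 = - u T) :
    (sSup ((fun t => ‖u t‖) '' Set.Icc (0:ℝ) T))^2 ≤
      T / 4 * ∫ t in Set.Ioc (0:ℝ) T, ‖u' t‖^2 := by
  obtain ⟨hL2, hrep⟩ := hu
  set μ := volume.restrict (Set.Ioc (0:ℝ) T) with hμ
  haveI : IsFiniteMeasure μ := by
    constructor
    rw [hμ, Measure.restrict_apply_univ, Real.volume_Ioc]
    exact ENNReal.ofReal_lt_top
  have hint : IntegrableOn u' (Set.Ioc 0 T) := hL2.integrable one_le_two
  have hII : IntervalIntegrable u' volume 0 T :=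
    (intervalIntegrable_iff_integrableOn_Ioc_of_le hT.le).2 hint
  set I := ∫ t in Set.Ioc (0:ℝ) T, ‖u' t‖^2 with hIdef
  have hI0 : 0 ≤ I := integral_nonneg fun t => sq_nonneg _
  -- Cauchy-Schwarz
  have hCS : (∫ t in Set.Ioc (0:ℝ) T, ‖u' t‖) ≤ Real.sqrt (T * I) := by
    have h2 : ((2:ℝ)).HolderConjugate 2 := by constructor <;> norm_num
    have hf : MemLp (fun t => ‖u' t‖) (ENNReal.ofReal 2) μ := by
      have h22 : (ENNReal.ofReal 2) = 2 := by norm_num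
      rw [h22]; exact hL2.norm
    have hg : MemLp (fun _ : ℝ => (1:ℝ)) (ENNReal.ofReal 2) μ := memLp_const 1
    have key := MeasureTheory.integral_mul_le_Lp_mul_Lq_of_nonneg h2
      (Filter.Eventually.of_forall fun t => norm_nonneg (u' t))
      (Filter.Eventually.of_forall fun _ => zero_le_one) hf hg
    simp only [mul_one, Real.one_rpow] at key
    have hμuniv : ∫ _ : ℝ, (1:ℝ) ∂μ = T := by
      simp [hμ, Real.volume_Ioc, hT.le]
    rw [hμuniv] at key
    have hIeq : (∫ t, ‖u' t‖ ^ (2:ℝ) ∂μ) = I := by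
      rw [hIdef]
      apply integral_congr_ae
      filter_upwards with t
      rw [← Real.rpow_natCast ‖u' t‖ 2]; norm_num
    rw [hIeq] at key
    calc ∫ t in Set.Ioc (0:ℝ) T, ‖u' t‖ = ∫ t, ‖u' t‖ ∂μ := rfl
      _ ≤ I ^ (1/(2:ℝ)) * T ^ (1/(2:ℝ)) := key
      _ = Real.sqrt (T * I) := by
          rw [Real.sqrt_mul hT.le, Real.sqrt_eq_rpow, Real.sqrt_eq_rpow]; ring
  -- pointwise bound
  set c := Real.sqrt (T * I) / 2 with hc
  have hc0 : 0 ≤ c := by positivity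
  have hbound : ∀ t ∈ Set.Icc (0:ℝ) T, ‖u t‖ ≤ c := by
    intro t ht
    obtain ⟨ht0, htT⟩ := ht
    have h1 : IntervalIntegrable u' volume 0 t :=
      hII.mono_set (by rw [Set.uIcc_of_le ht0, Set.uIcc_of_le hT.le]; exact Set.Icc_subset_Icc le_rfl htT)
    have h2 : IntervalIntegrable u' volume t T :=
      hII.mono_set (by rw [Set.uIcc_of_le htT, Set.uIcc_of_le hT.le]; exact Set.Icc_subset_Icc ht0 le_rfl)
    set A := ∫ s in (0:ℝ)..t, u' s with hA
    set B := ∫ s in t..T, u' s with hB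
    have hsplit : ∫ s in (0:ℝ)..T, u' s = A + B :=
      (intervalIntegral.integral_add_adjacent_intervals h1 h2).symm
    have et : u t = u 0 + A := hrep t ⟨ht0, htT⟩
    have eT : u T = u 0 + (A + B) := by
      rw [hrep T ⟨hT.le, le_rfl⟩, hsplit]
    have hneg : u 0 = -(u 0 + (A + B)) := by rw [← eT]; exact hap
    have h0 : u 0 + (u 0 + (A + B)) = 0 := eq_neg_iff_add_eq_zero.mp hneg
    have e0 : u t + u t = A - B := by
      calc u t + u t = (u 0 + A) + (u 0 + A) := by rw [et]
        _ = (u 0 + (u 0 + (A + B))) + (A - B) := by abel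
        _ = A - B := by rw [h0, zero_add]
    have hAB : ‖A - B‖ ≤ ∫ s in Set.Ioc (0:ℝ) T, ‖u' s‖ := by
      calc ‖A - B‖ ≤ ‖A‖ + ‖B‖ := norm_sub_le _ _
        _ ≤ (∫ s in (0:ℝ)..t, ‖u' s‖) + ∫ s in t..T, ‖u' s‖ :=
            add_le_add (intervalIntegral.norm_integral_le_integral_norm ht0)
              (intervalIntegral.norm_integral_le_integral_norm htT)
        _ = ∫ s in (0:ℝ)..T, ‖u' s‖ :=
            intervalIntegral.integral_add_adjacent_intervals h1.norm h2.norm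
        _ = ∫ s in Set.Ioc (0:ℝ) T, ‖u' s‖ := intervalIntegral.integral_of_le hT.le
    have h2n : 2 * ‖u t‖ = ‖u t + u t‖ := by
      rw [← two_smul ℝ, norm_smul]; simp
    have : 2 * ‖u t‖ ≤ Real.sqrt (T * I) := by
      rw [h2n, e0]; exact hAB.trans hCS
    rw [hc]; linarith
  -- conclude
  have hne : (‖u 0‖) ∈ (fun t => ‖u t‖) '' Set.Icc (0:ℝ) T :=
    ⟨0, ⟨le_rfl, hT.le⟩, rfl⟩
  have hub : ∀ x ∈ (fun t => ‖u t‖) '' Set.Icc (0:ℝ) T, x ≤ c := by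
    rintro x ⟨t, ht, rfl⟩; exact hbound t ht
  have hS_le : sSup ((fun t => ‖u t‖) '' Set.Icc (0:ℝ) T) ≤ c :=
    Real.sSup_le hub hc0
  have hS0 : 0 ≤ sSup ((fun t => ‖u t‖) '' Set.Icc (0:ℝ) T) :=
    (norm_nonneg _).trans (le_csSup ⟨c, hub⟩ hne)
  calc (sSup ((fun t => ‖u t‖) '' Set.Icc (0:ℝ) T))^2 ≤ c^2 :=
        pow_le_pow_left₀ hS0 hS_le 2
    _ = T / 4 * I := by
        rw [hc, div_pow, Real.sq_sqrt (by positivity : (0:ℝ) ≤ T * I)]; ring
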